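/- Let Σ be a finite alphabet, p ∈ Σ* a fixed word, and L = p·Σ⁺ (the set of all words strictly extending p). If u is a prefix of p and u' is syntactically congruent to u with respect to L (i.e., for all x, y ∈ Σ*, xuy ∈ L ↔ xu'y ∈ L), then u = u'. -/

import Mathlib

/-- Syntactic congruence of a language `L ⊆ Σ*`. -/
def SynCong {α : Type*} (L : Set (List α)) (u v : List α) : Prop :=
  ∀ x y : List α, (x ++ u ++ y) ∈ L ↔ (x ++ v ++ y) ∈ L

/-- `p·Σ⁺`: words strictly extending `p`. -/
def plusLang {α : Type*} (p : List α) : Set (List α) :=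
  {w | ∃ s : List α, s ≠ [] ∧ w = p ++ s}

/-- `p·Σ^{≥2}`: words extending `p` by at least two letters. -/
def geTwoLang {α : Type*} (p : List α) : Set (List α) :=
  {w | ∃ s : List α, 2 ≤ s.length ∧ w = p ++ s}

/-- `w·Σ*`: words having `w` as a prefix. -/
def starLang {α : Type*} (w : List α) : Set (List α) :=
  {u | ∃ s : List α, u = w ++ s}

theorem stmt0 {α : Type*} [Fintype α] [Nonempty α] (p u u' : List α)
    (hu : u <+: p) (hcong : SynCong (plusLang p) u u') : u = u' := by
  obtain ⟨t, ht⟩ := hu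
  obtain ⟨a⟩ := ‹Nonempty α›
  -- u' ++ t ++ [a] ∈ L
  have h1 : ([] : List α) ++ u' ++ (t ++ [a]) ∈ plusLang p := by
    rw [← hcong]
    refine ⟨[a], by simp, ?_⟩
    simp [← ht]
  obtain ⟨s, hs, heq⟩ := h1
  simp only [List.nil_append] at heq
  -- u' ++ t ∉ L
  have h2 : ([] : List α) ++ u' ++ t ∉ plusLang p := by
    rw [← hcong]
    rintro ⟨s', hs', heq'⟩
    simp only [List.nil_append, ht] at heq'
    exact hs' (by simpa using congrArg List.length heq')
  simp only [List.nil_append] at h2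
  -- drop last letter
  have hdrop : u' ++ t = p ++ s.dropLast := by
    have := congrArg List.dropLast heq
    rwa [← List.append_assoc, List.dropLast_concat, List.dropLast_append_of_ne_nil hs] at this
  have hsd : s.dropLast = [] := by
    by_contra h
    exact h2 ⟨s.dropLast, h, hdrop⟩
  rw [hsd, List.append_nil] at hdrop
  have : u ++ t = u' ++ t := by rw [ht, hdrop]
  exact List.append_cancel_right this
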